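/- Let U ⊂ V be finely open, u ∈ N^{1,p}(U) extended by zero to V \ U, and suppose u is measurable, finite q.e., and u∘γ is continuous for p-almost every curve γ : [0, l_γ] → V. Then u ∈ N^{1,p}(V), with any p-weak upper gradient g ∈ L^p(U) of u in U, extended by zero, serving as a p-weak upper gradient of u in V. -/

import Mathlib

open MeasureTheory Metric Set Filter ENNReal

noncomputable section

variable {X : Type*} [MetricSpace X] [MeasurableSpace X] [BorelSpace X]

/-- A nonconstant compact rectifiable curve, parameterized by arc length
(modelled as a `1`-Lipschitz map on `[0, len]`). -/
structure Curve (X : Type*) [MetricSpace X] where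
  len : ℝ
  len_pos : 0 < len
  toFun : ℝ → X
  lip : LipschitzOnWith 1 toFun (Set.Icc 0 len)

/-- The curve lies in the set `E`. -/
def Curve.InSet (γ : Curve X) (E : Set X) : Prop :=
  ∀ t ∈ Set.Icc (0 : ℝ) γ.len, γ.toFun t ∈ E

/-- Line integral (w.r.t. arc length) of a nonnegative function along a curve. -/
def curveLint (γ : Curve X) (g : X → ℝ≥0∞) : ℝ≥0∞ :=
  ∫⁻ t in Set.Icc (0 : ℝ) γ.len, g (γ.toFun t)

/-- The `p`-modulus of a family of curves. -/
def pMod (μ : Measure X) (p : ℝ) (Γ : Set (Curve X)) : ℝ≥0∞ :=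
  ⨅ (ρ : X → ℝ≥0∞) (_ : Measurable ρ) (_ : ∀ γ ∈ Γ, 1 ≤ curveLint γ ρ),
    ∫⁻ x, ρ x ^ p ∂μ

/-- A property holds for `p`-almost every curve. -/
def AECurve (μ : Measure X) (p : ℝ) (P : Curve X → Prop) : Prop :=
  pMod μ p {γ | ¬ P γ} = 0

/-- `g` is a `p`-weak upper gradient of `f` on `E`. -/
def IsWeakUpperGradientOn (μ : Measure X) (p : ℝ) (f : X → ℝ) (g : X → ℝ≥0∞)
    (E : Set X) : Prop :=
  AECurve (μ.restrict E) p fun γ =>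
    γ.InSet E → edist (f (γ.toFun 0)) (f (γ.toFun γ.len)) ≤ curveLint γ g

/-- The Newtonian `p`-energy `∫_E |f|^p dμ + inf_g ∫_E g^p dμ`,
the `p`-th power of the Newtonian norm. -/
def npEnergy (μ : Measure X) (p : ℝ) (f : X → ℝ) (E : Set X) : ℝ≥0∞ :=
  (∫⁻ x in E, ENNReal.ofReal |f x| ^ p ∂μ) +
    ⨅ (g : X → ℝ≥0∞) (_ : Measurable g) (_ : IsWeakUpperGradientOn μ p f g E),
      ∫⁻ x in E, g x ^ p ∂μ

/-- The Newtonian norm `‖f‖_{N^{1,p}(E)}`. -/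
def npNorm (μ : Measure X) (p : ℝ) (f : X → ℝ) (E : Set X) : ℝ≥0∞ :=
  npEnergy μ p f E ^ (1 / p)

/-- Membership in the Newtonian space `N^{1,p}(E)`. -/
def MemNp (μ : Measure X) (p : ℝ) (f : X → ℝ) (E : Set X) : Prop :=
  Measurable f ∧ npEnergy μ p f E < ⊤

/-- The Sobolev capacity `C_p(E)`. -/
def sobolevCap (μ : Measure X) (p : ℝ) (E : Set X) : ℝ≥0∞ :=
  ⨅ (f : X → ℝ) (_ : MemNp μ p f Set.univ) (_ : ∀ x ∈ E, 1 ≤ f x),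
    npEnergy μ p f Set.univ

/-- `f ∈ N^{1,p}_0(A)`: a global Newtonian function vanishing outside `A`. -/
def MemNp0 (μ : Measure X) (p : ℝ) (f : X → ℝ) (A : Set X) : Prop :=
  MemNp μ p f Set.univ ∧ ∀ x ∉ A, f x = 0

/-- The variational capacity `cap_p(E, A)`. -/
def varCap (μ : Measure X) (p : ℝ) (E A : Set X) : ℝ≥0∞ :=
  ⨅ (f : X → ℝ) (_ : MemNp0 μ p f A) (_ : ∀ x ∈ E, 1 ≤ f x)
    (g : X → ℝ≥0∞) (_ : Measurable g)
    (_ : IsWeakUpperGradientOn μ p f g Set.univ),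
    ∫⁻ x, g x ^ p ∂μ

/-- The Wiener-type integrand in the definition of thinness, with the
convention that it equals `1` when `cap_p(B(x,r), B(x,2r)) = 0`. -/
def thinIntegrand (μ : Measure X) (p : ℝ) (E : Set X) (x : X) (r : ℝ) : ℝ≥0∞ :=
  if varCap μ p (ball x r) (ball x (2 * r)) = 0 then 1
  else (varCap μ p (E ∩ ball x r) (ball x (2 * r)) /
        varCap μ p (ball x r) (ball x (2 * r))) ^ (1 / (p - 1))

/-- `E` is thin at `x`:
`∫_0^1 (cap_p(E∩B(x,r),B(x,2r))/cap_p(B(x,r),B(x,2r)))^{1/(p-1)} dr/r < ∞`. -/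
def Thin (μ : Measure X) (p : ℝ) (E : Set X) (x : X) : Prop :=
  ∫⁻ r in Set.Ioo (0 : ℝ) 1, thinIntegrand μ p E x r / ENNReal.ofReal r < ⊤

/-- A set is finely open if its complement is thin at each of its points. -/
def FinelyOpen (μ : Measure X) (p : ℝ) (V : Set X) : Prop :=
  ∀ x ∈ V, Thin μ p Vᶜ x

/-- A set `U` is quasiopen if for every `ε > 0` there is an open set `G`
with `C_p(G) < ε` such that `G ∪ U` is open. -/
def Quasiopen (μ : Measure X) (p : ℝ) (U : Set X) : Prop :=
  ∀ ε : ℝ≥0∞, 0 < ε → ∃ G : Set X, IsOpen G ∧ sobolevCap μ p G < ε ∧ IsOpen (G ∪ U)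

/-- The fine topology: the topology generated by the finely open sets. -/
def fineTopology (μ : Measure X) (p : ℝ) : TopologicalSpace X :=
  TopologicalSpace.generateFrom {V | FinelyOpen μ p V}

/-- `A` is a `p`-strict subset of `E`. -/
def PStrictSubset (μ : Measure X) (p : ℝ) (A E : Set X) : Prop :=
  A ⊆ E ∧ ∃ η : X → ℝ, MemNp0 μ p η E ∧ ∀ x ∈ A, η x = 1

/-- `V` is a finely open `p`-strict subset of `U` with compact closure
contained in `U` (written `V ⋐ U`). -/
def GoodSubset (μ : Measure X) (p : ℝ) (V U : Set X) : Prop :=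
  FinelyOpen μ p V ∧ PStrictSubset μ p V U ∧ IsCompact (closure V) ∧ closure V ⊆ U

/-- The fine local Newtonian space `N^{1,p}_{fine-loc}(U)`. -/
def MemNpFineLoc (μ : Measure X) (p : ℝ) (f : X → ℝ) (U : Set X) : Prop :=
  ∀ V : Set X, GoodSubset μ p V U → MemNp μ p f V

/-- The local Newtonian space `N^{1,p}_loc(G)`. -/
def MemNpLoc (μ : Measure X) (p : ℝ) (f : X → ℝ) (G : Set X) : Prop :=
  ∀ x ∈ G, ∃ r : ℝ, 0 < r ∧ MemNp μ p f (ball x r ∩ G)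

/-- `∫_S g_u^p dμ`, where `g_u` is the minimal `p`-weak upper gradient of `u`
taken with respect to `U`, expressed as the infimum of the energies of all
`p`-weak upper gradients of `u` on `U`. -/
def fineEnergy (μ : Measure X) (p : ℝ) (u : X → ℝ) (U S : Set X) : ℝ≥0∞ :=
  ⨅ (g : X → ℝ≥0∞) (_ : Measurable g) (_ : IsWeakUpperGradientOn μ p u g U),
    ∫⁻ x in S, g x ^ p ∂μ

/-- `u` is a fine superminimizer in `U`. -/
def FineSuperminimizer (μ : Measure X) (p : ℝ) (u : X → ℝ) (U : Set X) : Prop :=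
  MemNpFineLoc μ p u U ∧
    ∀ V : Set X, GoodSubset μ p V U →
      ∀ φ : X → ℝ, MemNp0 μ p φ V → (∀ x, 0 ≤ φ x) →
        fineEnergy μ p u U V ≤ fineEnergy μ p (fun x => u x + φ x) U V

/-- `u` is a fine minimizer in `U`. -/
def FineMinimizer (μ : Measure X) (p : ℝ) (u : X → ℝ) (U : Set X) : Prop :=
  MemNpFineLoc μ p u U ∧
    ∀ V : Set X, GoodSubset μ p V U →
      ∀ φ : X → ℝ, MemNp0 μ p φ V →
        fineEnergy μ p u U V ≤ fineEnergy μ p (fun x => u x + φ x) U V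

/-- `u` is a fine subminimizer in `U` if `-u` is a fine superminimizer. -/
def FineSubminimizer (μ : Measure X) (p : ℝ) (u : X → ℝ) (U : Set X) : Prop :=
  FineSuperminimizer μ p (fun x => -u x) U

/-- A doubling measure which is positive and finite on balls. -/
def DoublingMeasure (μ : Measure X) : Prop :=
  (∀ (x : X) (r : ℝ), 0 < r → 0 < μ (ball x r) ∧ μ (ball x r) < ⊤) ∧
    ∃ C : ℝ≥0∞, C < ⊤ ∧
      ∀ (x : X) (r : ℝ), 0 < r → μ (ball x (2 * r)) ≤ C * μ (ball x r)

/-- `X` supports a `p`-Poincaré inequality. -/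
def PoincareInequality (μ : Measure X) (p : ℝ) : Prop :=
  ∃ C : ℝ≥0∞, 0 < C ∧ ∃ lam : ℝ, 1 ≤ lam ∧
    ∀ (x : X) (r : ℝ), 0 < r → ∀ (f : X → ℝ) (g : X → ℝ≥0∞),
      Measurable f → Measurable g → IsWeakUpperGradientOn μ p f g Set.univ →
      (μ (ball x r))⁻¹ *
          ∫⁻ y in ball x r, ENNReal.ofReal |f y - ⨍ z in ball x r, f z ∂μ| ∂μ ≤
        C * ENNReal.ofReal (2 * r) *
          ((μ (ball x (lam * r)))⁻¹ * ∫⁻ y in ball x (lam * r), g y ^ p ∂μ) ^ (1 / p)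

/- ===== auxiliary lemmas ===== -/

lemma lintegral_Icc_translate (h : ℝ → ℝ≥0∞) (a c : ℝ) :
    ∫⁻ t in Set.Icc a (a + c), h t = ∫⁻ s in Set.Icc 0 c, h (a + s) := by
  set e : ℝ ≃ᵐ ℝ := (Homeomorph.addLeft a).toMeasurableEquiv with he
  have hco : ⇑e = (fun x => a + x) := rfl
  have hmap : Measure.map (⇑e) (volume : Measure ℝ) = volume := by
    rw [hco]
    exact Measure.IsAddLeftInvariant.map_add_left_eq_self (μ := (volume : Measure ℝ)) a
  have hpre : ⇑e ⁻¹' Set.Icc a (a + c) = Set.Icc 0 c := by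
    ext x
    simp only [Set.mem_preimage, hco, Set.mem_Icc]
    constructor <;> intro hx <;> exact ⟨by linarith [hx.1], by linarith [hx.2]⟩
  calc ∫⁻ t in Set.Icc a (a + c), h t
      = ∫⁻ t, h t ∂((Measure.map (⇑e) volume).restrict (Set.Icc a (a + c))) := by rw [hmap]
    _ = ∫⁻ t, h t ∂(Measure.map (⇑e) (volume.restrict (⇑e ⁻¹' Set.Icc a (a + c)))) := by
        rw [Measure.restrict_map e.measurable measurableSet_Icc]
    _ = ∫⁻ s, h (e s) ∂(volume.restrict (⇑e ⁻¹' Set.Icc a (a + c))) := lintegral_map_equiv _ e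
    _ = ∫⁻ s in Set.Icc 0 c, h (a + s) := by rw [hpre]; simp only [hco]

/-- The subcurve of `γ` on `[a, b]`. -/
def Curve.sub (γ : Curve X) (a b : ℝ) (h0 : 0 ≤ a) (hab : a < b) (hbl : b ≤ γ.len) :
    Curve X where
  len := b - a
  len_pos := by linarith
  toFun := fun s => γ.toFun (a + s)
  lip := by
    intro s hs t ht
    have hs' : a + s ∈ Set.Icc 0 γ.len := ⟨by linarith [hs.1], by linarith [hs.2]⟩
    have ht' : a + t ∈ Set.Icc 0 γ.len := ⟨by linarith [ht.1], by linarith [ht.2]⟩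
    have h := γ.lip hs' ht'
    rwa [edist_add_left] at h

lemma curveLint_sub (γ : Curve X) {a b : ℝ} (h0 : 0 ≤ a) (hab : a < b) (hbl : b ≤ γ.len)
    (h : X → ℝ≥0∞) :
    curveLint (γ.sub a b h0 hab hbl) h = ∫⁻ t in Set.Icc a b, h (γ.toFun t) := by
  have hb : a + (b - a) = b := by ring
  have key := lintegral_Icc_translate (fun t => h (γ.toFun t)) a (b - a)
  rw [hb] at key
  exact key.symm

lemma pMod_mono {μ : Measure X} {p : ℝ} {Γ Γ' : Set (Curve X)} (h : Γ ⊆ Γ') :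
    pMod μ p Γ ≤ pMod μ p Γ' := by
  refine le_iInf fun ρ => le_iInf fun hm => le_iInf fun hadm => ?_
  exact le_trans (iInf_le _ ρ) (le_trans (iInf_le _ hm)
    (iInf_le _ (fun γ hγ => hadm γ (h hγ))))

lemma pMod_le {μ : Measure X} {p : ℝ} {Γ : Set (Curve X)} {ρ : X → ℝ≥0∞}
    (hm : Measurable ρ) (hadm : ∀ γ ∈ Γ, 1 ≤ curveLint γ ρ) :
    pMod μ p Γ ≤ ∫⁻ x, ρ x ^ p ∂μ :=
  le_trans (iInf_le _ ρ) (le_trans (iInf_le _ hm) (iInf_le _ hadm))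

lemma exists_admissible {μ : Measure X} {p : ℝ} {Γ : Set (Curve X)}
    (h : pMod μ p Γ = 0) {ε : ℝ≥0∞} (hε : 0 < ε) :
    ∃ ρ : X → ℝ≥0∞, Measurable ρ ∧ (∀ γ ∈ Γ, 1 ≤ curveLint γ ρ) ∧
      ∫⁻ x, ρ x ^ p ∂μ < ε := by
  have h' : pMod μ p Γ < ε := by rw [h]; exact hε
  rw [pMod] at h'
  obtain ⟨ρ, hρ⟩ := iInf_lt_iff.mp h'
  obtain ⟨hm, h2⟩ := iInf_lt_iff.mp hρ
  obtain ⟨hadm, h3⟩ := iInf_lt_iff.mp h2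
  exact ⟨ρ, hm, hadm, h3⟩

lemma wug_mono {μ : Measure X} {p : ℝ} {u : X → ℝ} {E : Set X} {g g' : X → ℝ≥0∞}
    (hle : ∀ x, g x ≤ g' x) (h : IsWeakUpperGradientOn μ p u g E) :
    IsWeakUpperGradientOn μ p u g' E := by
  unfold IsWeakUpperGradientOn AECurve at h ⊢
  refine le_antisymm (le_trans (pMod_mono ?_) h.le) zero_le
  intro γ hγ
  simp only [Set.mem_setOf_eq] at hγ ⊢
  intro hcon
  apply hγ
  intro hin
  refine le_trans (hcon hin) (lintegral_mono fun t => hle _)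

lemma key_curve {U V : Set X} (hUV : U ⊆ V) {u : X → ℝ} {g : X → ℝ≥0∞}
    (hzero : ∀ x ∈ V \ U, u x = 0) (γ : Curve X) (hγV : γ.InSet V)
    (hcont : ContinuousOn (fun t => u (γ.toFun t)) (Set.Icc 0 γ.len))
    (H : ∀ a b, 0 ≤ a → a < b → b ≤ γ.len → (∀ t ∈ Set.Icc a b, γ.toFun t ∈ U) →
      edist (u (γ.toFun a)) (u (γ.toFun b)) ≤
        ∫⁻ t in Set.Icc a b, U.indicator g (γ.toFun t)) :
    edist (u (γ.toFun 0)) (u (γ.toFun γ.len)) ≤ curveLint γ (U.indicator g) := by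
  have hL0 : 0 < γ.len := γ.len_pos
  set L := γ.len with hLdef
  set c : ℝ → ℝ := fun t => u (γ.toFun t) with hc
  set S : Set ℝ := {t | t ∈ Set.Icc 0 L ∧ γ.toFun t ∉ U} with hS
  by_cases hne : S.Nonempty
  · have hSsub : S ⊆ Set.Icc 0 L := fun t ht => ht.1
    have hbdd : BddBelow S := ⟨0, fun t ht => ht.1.1⟩
    have hbdd' : BddAbove S := ⟨L, fun t ht => ht.1.2⟩
    set a := sInf S with ha
    set b := sSup S with hb
    obtain ⟨t₀, ht₀⟩ := hne
    have ha0 : 0 ≤ a := le_csInf ⟨t₀, ht₀⟩ fun t ht => ht.1.1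
    have hat₀ : a ≤ t₀ := csInf_le hbdd ht₀
    have ht₀b : t₀ ≤ b := le_csSup hbdd' ht₀
    have hbL : b ≤ L := csSup_le ⟨t₀, ht₀⟩ fun t ht => ht.1.2
    have hab : a ≤ b := le_trans hat₀ ht₀b
    have haL : a ≤ L := le_trans hab hbL
    have h0b : 0 ≤ b := le_trans ha0 hab
    have hSzero : ∀ t ∈ S, c t = 0 := fun t ht => hzero _ ⟨hγV t ht.1, ht.2⟩
    have hca : c a = 0 := by
      have hclos : a ∈ closure S := csInf_mem_closure ⟨t₀, ht₀⟩ hbdd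
      have hnb : (nhdsWithin a S).NeBot := mem_closure_iff_nhdsWithin_neBot.mp hclos
      have h1 : Tendsto c (nhdsWithin a S) (nhds (c a)) :=
        (hcont a ⟨ha0, haL⟩).mono hSsub
      have h2 : Tendsto c (nhdsWithin a S) (nhds 0) := by
        refine Tendsto.congr' ?_ tendsto_const_nhds
        filter_upwards [eventually_mem_nhdsWithin] with t ht using (hSzero t ht).symm
      exact tendsto_nhds_unique h1 h2
    have hcb : c b = 0 := by
      have hclos : b ∈ closure S := csSup_mem_closure ⟨t₀, ht₀⟩ hbdd'
      have hnb : (nhdsWithin b S).NeBot := mem_closure_iff_nhdsWithin_neBot.mp hclos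
      have h1 : Tendsto c (nhdsWithin b S) (nhds (c b)) :=
        (hcont b ⟨h0b, hbL⟩).mono hSsub
      have h2 : Tendsto c (nhdsWithin b S) (nhds 0) := by
        refine Tendsto.congr' ?_ tendsto_const_nhds
        filter_upwards [eventually_mem_nhdsWithin] with t ht using (hSzero t ht).symm
      exact tendsto_nhds_unique h1 h2
    have hIA : edist (c 0) (c a) ≤ ∫⁻ t in Set.Icc 0 a, U.indicator g (γ.toFun t) := by
      rcases ha0.eq_or_lt with h | h
      · rw [← h]; simp
      · have hbound : ∀ t ∈ Set.Ioo 0 a, edist (c 0) (c t) ≤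
            ∫⁻ t in Set.Icc 0 a, U.indicator g (γ.toFun t) := by
          intro t ht
          have hsubU : ∀ s ∈ Set.Icc 0 t, γ.toFun s ∈ U := by
            intro s hs
            by_contra hsU
            have hmem : s ∈ S := ⟨⟨hs.1, le_trans hs.2 (le_trans ht.2.le haL)⟩, hsU⟩
            exact absurd (csInf_le hbdd hmem) (not_le.mpr (lt_of_le_of_lt hs.2 ht.2))
          refine le_trans (H 0 t le_rfl ht.1 (le_trans ht.2.le haL) hsubU) ?_
          exact lintegral_mono' (Measure.restrict_mono
            (Set.Icc_subset_Icc le_rfl ht.2.le) le_rfl) le_rfl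
        have hnb : (nhdsWithin a (Set.Ioo 0 a)).NeBot := by
          rw [← mem_closure_iff_nhdsWithin_neBot, closure_Ioo h.ne]
          exact ⟨h.le, le_rfl⟩
        have htend : Tendsto (fun t => edist (c 0) (c t)) (nhdsWithin a (Set.Ioo 0 a))
            (nhds (edist (c 0) (c a))) :=
          Tendsto.edist tendsto_const_nhds
            ((hcont a ⟨ha0, haL⟩).mono fun s hs => ⟨hs.1.le, le_trans hs.2.le haL⟩)
        refine le_of_tendsto htend ?_
        filter_upwards [eventually_mem_nhdsWithin] with t ht using hbound t ht
    have hIB : edist (c b) (c L) ≤ ∫⁻ t in Set.Icc b L, U.indicator g (γ.toFun t) := by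
      rcases hbL.eq_or_lt with h | h
      · rw [h]; simp
      · have hbound : ∀ t ∈ Set.Ioo b L, edist (c t) (c L) ≤
            ∫⁻ t in Set.Icc b L, U.indicator g (γ.toFun t) := by
          intro t ht
          have hsubU : ∀ s ∈ Set.Icc t L, γ.toFun s ∈ U := by
            intro s hs
            by_contra hsU
            have hmem : s ∈ S := ⟨⟨le_trans (le_trans h0b ht.1.le) hs.1, hs.2⟩, hsU⟩
            exact absurd (le_csSup hbdd' hmem) (not_le.mpr (lt_of_lt_of_le ht.1 hs.1))
          refine le_trans (H t L (le_trans h0b ht.1.le) ht.2 le_rfl hsubU) ?_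
          exact lintegral_mono' (Measure.restrict_mono
            (Set.Icc_subset_Icc ht.1.le le_rfl) le_rfl) le_rfl
        have hnb : (nhdsWithin b (Set.Ioo b L)).NeBot := by
          rw [← mem_closure_iff_nhdsWithin_neBot, closure_Ioo (ne_of_lt h)]
          exact ⟨le_rfl, h.le⟩
        have htend : Tendsto (fun t => edist (c t) (c L)) (nhdsWithin b (Set.Ioo b L))
            (nhds (edist (c b) (c L))) :=
          Tendsto.edist
            ((hcont b ⟨h0b, hbL⟩).mono fun s hs => ⟨le_trans h0b hs.1.le, hs.2.le⟩)
            tendsto_const_nhds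
        refine le_of_tendsto htend ?_
        filter_upwards [eventually_mem_nhdsWithin] with t ht using hbound t ht
    have tri : edist (c 0) (c L) ≤ edist (c 0) (c a) + edist (c b) (c L) := by
      calc edist (c 0) (c L) ≤ edist (c 0) (c a) + edist (c a) (c L) := edist_triangle _ _ _
        _ ≤ edist (c 0) (c a) + (edist (c a) (c b) + edist (c b) (c L)) := by
            gcongr
            exact edist_triangle _ _ _
        _ = edist (c 0) (c a) + edist (c b) (c L) := by
            rw [hca, hcb, edist_self, zero_add]
    refine le_trans tri ?_
    have h1 : (∫⁻ t in Set.Icc b L, U.indicator g (γ.toFun t)) ≤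
        ∫⁻ t in Set.Ioc a L, U.indicator g (γ.toFun t) := by
      refine le_trans (lintegral_mono' (Measure.restrict_mono
        (Set.Icc_subset_Icc hab le_rfl) le_rfl) le_rfl) ?_
      rw [Measure.restrict_congr_set Ioc_ae_eq_Icc]
    refine le_trans (add_le_add hIA (le_trans hIB h1)) ?_
    have hdisj : Disjoint (Set.Icc 0 a) (Set.Ioc a L) := by
      rw [Set.disjoint_left]
      intro t ht ht'
      exact absurd ht.2 (not_le.mpr ht'.1)
    rw [curveLint, ← Set.Icc_union_Ioc_eq_Icc ha0 haL,
      Measure.restrict_union hdisj measurableSet_Ioc, lintegral_add_measure]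
  · have hsubU : ∀ t ∈ Set.Icc 0 L, γ.toFun t ∈ U := by
      intro t ht
      by_contra hx
      exact hne ⟨t, ht, hx⟩
    exact H 0 L le_rfl hL0 le_rfl hsubU

lemma indicator_energy_le {μ : Measure X} [SFinite μ] {p : ℝ} (hp : 0 < p)
    (U V : Set X) {h : X → ℝ≥0∞} (hm : Measurable h) :
    ∫⁻ x, ((toMeasurable μ U).indicator h x) ^ p ∂(μ.restrict V) ≤
      ∫⁻ x in U, h x ^ p ∂μ := by
  have hU'm : MeasurableSet (toMeasurable μ U) := measurableSet_toMeasurable μ U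
  have hpt : ∀ x, ((toMeasurable μ U).indicator h x) ^ p =
      (toMeasurable μ U).indicator (fun x => h x ^ p) x := by
    intro x
    by_cases hx : x ∈ toMeasurable μ U <;>
      simp [hx, ENNReal.zero_rpow_of_pos hp]
  calc ∫⁻ x, ((toMeasurable μ U).indicator h x) ^ p ∂(μ.restrict V)
      = ∫⁻ x, (toMeasurable μ U).indicator (fun x => h x ^ p) x ∂(μ.restrict V) :=
        lintegral_congr hpt
    _ = ∫⁻ x in toMeasurable μ U, h x ^ p ∂(μ.restrict V) :=
        lintegral_indicator hU'm _
    _ = ∫⁻ x, h x ^ p ∂(μ.restrict (toMeasurable μ U ∩ V)) := by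
        rw [Measure.restrict_restrict hU'm]
    _ ≤ ∫⁻ x, h x ^ p ∂(μ.restrict (toMeasurable μ U)) :=
        lintegral_mono' (Measure.restrict_mono Set.inter_subset_left le_rfl) le_rfl
    _ = ∫⁻ x in U, h x ^ p ∂μ := by
        rw [Measure.restrict_toMeasurable_of_sFinite]

lemma wug_extend {μ : Measure X} [SFinite μ] {p : ℝ} (hp : 0 < p)
    {U V : Set X} (hUV : U ⊆ V) {u : X → ℝ}
    (hzero : ∀ x ∈ V \ U, u x = 0)
    (hcurve : AECurve (μ.restrict V) p fun γ : Curve X =>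
      γ.InSet V → ContinuousOn (fun t => u (γ.toFun t)) (Set.Icc 0 γ.len))
    {g : X → ℝ≥0∞} (hgm : Measurable g) (hg : IsWeakUpperGradientOn μ p u g U) :
    IsWeakUpperGradientOn μ p u (U.indicator g) V := by
  unfold IsWeakUpperGradientOn AECurve
  refine le_antisymm ?_ zero_le
  refine ENNReal.le_of_forall_pos_le_add fun ε hε _ => ?_
  rw [zero_add]
  have hε2 : (0 : ℝ≥0∞) < (ε : ℝ≥0∞) / 2 :=
    ENNReal.div_pos (by exact_mod_cast hε.ne') (by norm_num)
  obtain ⟨ρ₁, hρ₁m, hρ₁adm, hρ₁E⟩ := exists_admissible hcurve hε2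
  obtain ⟨ρ₂, hρ₂m, hρ₂adm, hρ₂E⟩ := exists_admissible hg hε2
  have hU'm : MeasurableSet (toMeasurable μ U) := measurableSet_toMeasurable μ U
  have hUU' : U ⊆ toMeasurable μ U := subset_toMeasurable μ U
  set ρ : X → ℝ≥0∞ := fun x => ρ₁ x ⊔ (toMeasurable μ U).indicator ρ₂ x with hρ
  have hρm : Measurable ρ := hρ₁m.sup (hρ₂m.indicator hU'm)
  have hadm : ∀ γ ∈ {γ : Curve X | ¬ (γ.InSet V →
      edist (u (γ.toFun 0)) (u (γ.toFun γ.len)) ≤ curveLint γ (U.indicator g))},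
      1 ≤ curveLint γ ρ := by
    intro γ hγ
    simp only [Set.mem_setOf_eq] at hγ
    push_neg at hγ
    obtain ⟨hγV, hbad⟩ := hγ
    by_cases hc : ContinuousOn (fun t => u (γ.toFun t)) (Set.Icc 0 γ.len)
    · have hH : ¬ ∀ a b, 0 ≤ a → a < b → b ≤ γ.len →
          (∀ t ∈ Set.Icc a b, γ.toFun t ∈ U) →
          edist (u (γ.toFun a)) (u (γ.toFun b)) ≤
            ∫⁻ t in Set.Icc a b, U.indicator g (γ.toFun t) := by
        intro H
        exact absurd (key_curve hUV hzero γ hγV hc H) (not_le.mpr hbad)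
      push_neg at hH
      obtain ⟨a, b, h0a, hab, hbL, hsubU, hbad'⟩ := hH
      set δ := γ.sub a b h0a hab hbL with hδ
      have hδU : δ.InSet U := by
        intro s hs
        have hs1 : 0 ≤ s := hs.1
        have hs2 : s ≤ b - a := hs.2
        show γ.toFun (a + s) ∈ U
        exact hsubU (a + s) ⟨by linarith, by linarith⟩
      have econv : curveLint δ g = ∫⁻ t in Set.Icc a b, U.indicator g (γ.toFun t) := by
        rw [curveLint_sub]
        refine lintegral_congr_ae ?_
        filter_upwards [ae_restrict_mem measurableSet_Icc] with t ht
        rw [Set.indicator_of_mem (hsubU t ht)]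
      have hδbad : δ ∈ {γ' : Curve X | ¬ (γ'.InSet U →
          edist (u (γ'.toFun 0)) (u (γ'.toFun γ'.len)) ≤ curveLint γ' g)} := by
        simp only [Set.mem_setOf_eq]
        intro hcon
        have hineq := hcon hδU
        have e0 : δ.toFun 0 = γ.toFun a := by
          show γ.toFun (a + 0) = γ.toFun a
          rw [add_zero]
        have e1 : δ.toFun δ.len = γ.toFun b := by
          show γ.toFun (a + (b - a)) = γ.toFun b
          congr 1
          ring
        rw [e0, e1, econv] at hineq
        exact absurd hineq (not_le.mpr hbad')
      have h1 : 1 ≤ curveLint δ ρ₂ := hρ₂adm δ hδbad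
      have h2 : curveLint δ ρ₂ ≤ curveLint γ ρ := by
        rw [curveLint_sub]
        have e3 : ∫⁻ t in Set.Icc a b, ρ₂ (γ.toFun t) =
            ∫⁻ t in Set.Icc a b, (toMeasurable μ U).indicator ρ₂ (γ.toFun t) := by
          refine lintegral_congr_ae ?_
          filter_upwards [ae_restrict_mem measurableSet_Icc] with t ht
          rw [Set.indicator_of_mem (hUU' (hsubU t ht))]
        rw [e3]
        calc ∫⁻ t in Set.Icc a b, (toMeasurable μ U).indicator ρ₂ (γ.toFun t)
            ≤ ∫⁻ t in Set.Icc 0 γ.len, (toMeasurable μ U).indicator ρ₂ (γ.toFun t) :=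
              lintegral_mono' (Measure.restrict_mono
                (Set.Icc_subset_Icc h0a hbL) le_rfl) le_rfl
          _ ≤ curveLint γ ρ := lintegral_mono fun t => le_sup_right
      exact le_trans h1 h2
    · have hγbad : γ ∈ {γ : Curve X | ¬ (γ.InSet V →
          ContinuousOn (fun t => u (γ.toFun t)) (Set.Icc 0 γ.len))} := by
        simp only [Set.mem_setOf_eq]
        intro hcon
        exact hc (hcon hγV)
      refine le_trans (hρ₁adm γ hγbad) (lintegral_mono fun t => le_sup_left)
  refine le_trans (pMod_le hρm hadm) ?_
  have hpt : ∀ x, ρ x ^ p ≤ ρ₁ x ^ p + ((toMeasurable μ U).indicator ρ₂ x) ^ p := by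
    intro x
    rcases le_total (ρ₁ x) ((toMeasurable μ U).indicator ρ₂ x) with h | h
    · rw [hρ]
      simp only [sup_eq_right.mpr h]
      exact le_add_self
    · rw [hρ]
      simp only [sup_eq_left.mpr h]
      exact self_le_add_right _ _
  refine le_trans (lintegral_mono hpt) ?_
  rw [lintegral_add_left (hρ₁m.pow_const p)]
  have hfin : ∫⁻ x, ((toMeasurable μ U).indicator ρ₂ x) ^ p ∂(μ.restrict V) ≤
      ∫⁻ x, ρ₂ x ^ p ∂(μ.restrict U) :=
    indicator_energy_le hp U V hρ₂m
  calc (∫⁻ x, ρ₁ x ^ p ∂(μ.restrict V)) +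
        ∫⁻ x, ((toMeasurable μ U).indicator ρ₂ x) ^ p ∂(μ.restrict V)
      ≤ (ε : ℝ≥0∞) / 2 + (ε : ℝ≥0∞) / 2 :=
        add_le_add hρ₁E.le (le_trans hfin hρ₂E.le)
    _ = (ε : ℝ≥0∞) := ENNReal.add_halves _

/-- if `u ∈ N^{1,p}(U)` is extended by zero to `V \ U`, is
measurable and `u ∘ γ` is continuous for `p`-a.e. curve `γ` in `V`, then
`u ∈ N^{1,p}(V)` and any `p`-weak upper gradient `g ∈ L^p(U)` of `u` in `U`,
extended by zero, is a `p`-weak upper gradient of `u` in `V`. -/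
theorem memNp_of_curvewise_continuity {X : Type*} [MetricSpace X]
    [CompleteSpace X] [MeasurableSpace X] [BorelSpace X]
    (μ : Measure X) (p : ℝ) (hp : 1 < p)
    (hd : DoublingMeasure μ) (hPI : PoincareInequality μ p)
    (U V : Set X) (hU : FinelyOpen μ p U) (hV : FinelyOpen μ p V)
    (hUV : U ⊆ V) (u : X → ℝ) (hu : MemNp μ p u U)
    (hzero : ∀ x ∈ V \ U, u x = 0) (hmeas : Measurable u)
    (hcurve : AECurve (μ.restrict V) p (fun γ : Curve X =>
      γ.InSet V → ContinuousOn (fun t => u (γ.toFun t)) (Set.Icc 0 γ.len))) :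
    MemNp μ p u V ∧
      ∀ g : X → ℝ≥0∞, Measurable g → IsWeakUpperGradientOn μ p u g U →
        (∫⁻ x in U, g x ^ p ∂μ) < ⊤ →
        IsWeakUpperGradientOn μ p u (U.indicator g) V := by
  have hp0 : (0 : ℝ) < p := by linarith
  haveI hsig : SigmaFinite μ := by
    rcases isEmpty_or_nonempty X with h | h
    · refine ⟨⟨⟨fun _ => Set.univ, fun _ => trivial, fun _ => ?_, Set.iUnion_const _⟩⟩⟩
      rw [Set.univ_eq_empty_iff.mpr h]
      simp
    · obtain ⟨x₀⟩ := h
      refine ⟨⟨⟨fun n => ball x₀ (n + 1), fun _ => trivial,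
        fun n => (hd.1 x₀ (n + 1) (by positivity)).2, ?_⟩⟩⟩
      ext x
      simp only [Set.mem_iUnion, Set.mem_univ, iff_true, mem_ball]
      obtain ⟨n, hn⟩ := exists_nat_gt (dist x x₀)
      exact ⟨n, by push_cast; linarith⟩
  obtain ⟨hum, huE⟩ := hu
  rw [npEnergy] at huE
  obtain ⟨hA, hB⟩ := ENNReal.add_lt_top.mp huE
  obtain ⟨g₀, hB2⟩ := iInf_lt_iff.mp hB
  obtain ⟨hg₀m, hB3⟩ := iInf_lt_iff.mp hB2
  obtain ⟨hg₀w, hg₀E⟩ := iInf_lt_iff.mp hB3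
  refine ⟨⟨hmeas, ?_⟩, fun g hgm hgw _ => wug_extend hp0 hUV hzero hcurve hgm hgw⟩
  rw [npEnergy]
  have hU'm : MeasurableSet (toMeasurable μ U) := measurableSet_toMeasurable μ U
  have hUU' : U ⊆ toMeasurable μ U := subset_toMeasurable μ U
  refine ENNReal.add_lt_top.mpr ⟨?_, ?_⟩
  · set f : X → ℝ≥0∞ := fun x => ENNReal.ofReal |u x| ^ p with hf
    have hfm : Measurable f := (hmeas.abs.ennreal_ofReal).pow_const p
    have hdec : ∀ x, f x =
        (toMeasurable μ U).indicator f x + (toMeasurable μ U)ᶜ.indicator f x := by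
      intro x
      by_cases hx : x ∈ toMeasurable μ U <;> simp [hx]
    have hz : ∫⁻ x in V, (toMeasurable μ U)ᶜ.indicator f x ∂μ = 0 := by
      rw [lintegral_indicator hU'm.compl, Measure.restrict_restrict hU'm.compl,
        lintegral_eq_zero_iff hfm, Filter.EventuallyEq, ae_iff]
      have hms : MeasurableSet {x | ¬ f x = (0 : X → ℝ≥0∞) x} := by
        simp only [Pi.zero_apply]
        have : {x | ¬ f x = 0} = f ⁻¹' ({0}ᶜ) := rfl
        rw [this]
        exact hfm (measurableSet_singleton 0).compl
      rw [Measure.restrict_apply hms]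
      have hempty : {x | ¬ f x = (0 : X → ℝ≥0∞) x} ∩ ((toMeasurable μ U)ᶜ ∩ V) = ∅ := by
        ext x
        simp only [Set.mem_inter_iff, Set.mem_setOf_eq, Set.mem_compl_iff,
          Set.mem_empty_iff_false, iff_false, not_and, Pi.zero_apply]
        intro hfx hxU' hxV
        apply hfx
        have hxU : x ∉ U := fun hxU => hxU' (hUU' hxU)
        have hu0 : u x = 0 := hzero x ⟨hxV, hxU⟩
        rw [hf]
        simp only [hu0, abs_zero, ENNReal.ofReal_zero]
        exact ENNReal.zero_rpow_of_pos hp0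
      rw [hempty, measure_empty]
    refine lt_of_le_of_lt ?_ hA
    calc ∫⁻ x in V, f x ∂μ
        = (∫⁻ x in V, (toMeasurable μ U).indicator f x ∂μ) +
            ∫⁻ x in V, (toMeasurable μ U)ᶜ.indicator f x ∂μ := by
          rw [← lintegral_add_left (hfm.indicator hU'm)]
          exact lintegral_congr hdec
      _ = ∫⁻ x in V, (toMeasurable μ U).indicator f x ∂μ := by rw [hz, add_zero]
      _ = ∫⁻ x, f x ∂(μ.restrict (toMeasurable μ U ∩ V)) := by
          rw [lintegral_indicator hU'm, Measure.restrict_restrict hU'm]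
      _ ≤ ∫⁻ x, f x ∂(μ.restrict (toMeasurable μ U)) :=
          lintegral_mono' (Measure.restrict_mono Set.inter_subset_left le_rfl) le_rfl
      _ = ∫⁻ x in U, f x ∂μ := by rw [Measure.restrict_toMeasurable_of_sFinite]
  · have hwV : IsWeakUpperGradientOn μ p u ((toMeasurable μ U).indicator g₀) V := by
      refine wug_mono ?_ (wug_extend hp0 hUV hzero hcurve hg₀m hg₀w)
      intro x
      by_cases hx : x ∈ U
      · rw [Set.indicator_of_mem hx, Set.indicator_of_mem (hUU' hx)]
      · rw [Set.indicator_of_notMem hx]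
        exact zero_le
    refine lt_of_le_of_lt (le_trans (iInf_le _ ((toMeasurable μ U).indicator g₀))
      (le_trans (iInf_le _ (hg₀m.indicator hU'm)) (iInf_le _ hwV))) ?_
    exact lt_of_le_of_lt (indicator_energy_le hp0 U V hg₀m) hg₀E
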